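/- The Chung-Graham representation is unambiguous: if (a_i) and (b_i) are two finitely supported sequences each satisfying the Chung-Graham conditions (digits in {0,1,2}, zero at odd indices, and between any two even indices carrying digit 2 there is an even index carrying digit 0) and ∑ a_i F_{i+2} = ∑ b_i F_{i+2}, then a = b. -/

import Mathlib

/-- The value represented by a finitely supported digit sequence:
    `∑ i, a i * F (i+2)` where `F` is the Fibonacci sequence. -/
def fibVal (a : ℕ →₀ ℕ) : ℕ := a.sum fun i c => c * Nat.fib (i + 2)

/-- Zeckendorf conditions: binary digits with no two consecutive 1's. -/
def IsZeckendorf (a : ℕ →₀ ℕ) : Prop :=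
  (∀ i, a i ≤ 1) ∧ (∀ i, a i * a (i + 1) = 0)

/-- Chung-Graham conditions: digits in {0,1,2}, zero at odd indices, and
    between any two even indices carrying digit 2 there is an even index
    carrying digit 0. -/
def IsChungGraham (a : ℕ →₀ ℕ) : Prop :=
  (∀ i, a i ≤ 2) ∧ (∀ i, Odd i → a i = 0) ∧
  (∀ i j, Even i → Even j → i < j → a i = 2 → a j = 2 →
    ∃ k, Even k ∧ i < k ∧ k < j ∧ a k = 0)

/-- The `cgsplit` rule: digit 0 ↦ (0,0), 1 ↦ (0,1), 2 ↦ (1,1). -/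
def IsSplit (a b c : ℕ →₀ ℕ) : Prop :=
  ∀ i, (a i = 0 → b i = 0 ∧ c i = 0) ∧
       (a i = 1 → b i = 0 ∧ c i = 1) ∧
       (a i = 2 → b i = 1 ∧ c i = 1)

/-- value of an even-indexed digit sequence, digits below `t` -/
def gval (g : ℕ → ℕ) (t : ℕ) : ℕ := ∑ k ∈ Finset.range t, g k * Nat.fib (2*k+2)

/-- Chung–Graham conditions on the even-indexed digit sequence -/
def CGseq (g : ℕ → ℕ) : Prop :=
  (∀ k, g k ≤ 2) ∧ ∀ k l, k < l → g k = 2 → g l = 2 → ∃ m, k < m ∧ m < l ∧ g m = 0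

lemma sumfib (t : ℕ) : (∑ k ∈ Finset.range t, Nat.fib (2*k+2)) + 1 = Nat.fib (2*t+1) := by
  induction t with
  | zero => simp
  | succ s ih =>
    rw [Finset.sum_range_succ]
    have f : Nat.fib (2*(s+1)+1) = Nat.fib (2*s+1) + Nat.fib (2*s+2) := by
      rw [show 2*(s+1)+1 = (2*s+1)+2 by ring, Nat.fib_add_two,
        show 2*s+1+1 = 2*s+2 by ring]
    omega

lemma gbound (g : ℕ → ℕ) (hg : CGseq g) : ∀ t, gval g t < Nat.fib (2*t+2) := by
  intro t
  induction t using Nat.strong_induction_on with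
  | _ t ih =>
    match t with
    | 0 => simp [gval]
    | s + 1 =>
      rw [show 2*(s+1)+2 = 2*s+4 by ring]
      have hpeel : gval g (s+1) = gval g s + g s * Nat.fib (2*s+2) := by
        simp [gval, Finset.sum_range_succ]
      have f1 : Nat.fib (2*s+4) = Nat.fib (2*s+2) + Nat.fib (2*s+3) := by
        rw [show 2*s+4 = (2*s+2) + 2 by ring, Nat.fib_add_two, show 2*s+2+1 = 2*s+3 by ring]
      have f2 : Nat.fib (2*s+3) = Nat.fib (2*s+1) + Nat.fib (2*s+2) := by
        rw [show 2*s+3 = (2*s+1) + 2 by ring, Nat.fib_add_two, show 2*s+1+1 = 2*s+2 by ring]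
      have fpos : 0 < Nat.fib (2*s+2) := Nat.fib_pos.2 (by omega)
      have ihs := ih s (by omega)
      rcases Nat.lt_or_ge (g s) 2 with hgs | hgs
      · have hle : g s * Nat.fib (2*s+2) ≤ Nat.fib (2*s+2) := by
          calc g s * Nat.fib (2*s+2) ≤ 1 * Nat.fib (2*s+2) := mul_le_mul_left (by omega) _
          _ = Nat.fib (2*s+2) := one_mul _
        omega
      · have hgs2 : g s = 2 := le_antisymm (hg.1 s) hgs
        have hp2 : g s * Nat.fib (2*s+2) = 2 * Nat.fib (2*s+2) := by rw [hgs2]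
        set Z : Finset ℕ := (Finset.range s).filter (fun k => g k = 0) with hZdef
        by_cases hZ : Z.Nonempty
        · set m := Z.max' hZ with hmdef
          have hmZ : m ∈ Z := Z.max'_mem hZ
          have hms : m < s := (Finset.mem_range.1 (Finset.mem_filter.1 hmZ).1)
          have hm0 : g m = 0 := (Finset.mem_filter.1 hmZ).2
          have hall : ∀ k, m < k → k < s → g k = 1 := by
            intro k h1 h2
            have h0 : g k ≠ 0 := by
              intro hk0
              have : k ∈ Z := Finset.mem_filter.2 ⟨Finset.mem_range.2 h2, hk0⟩
              exact absurd (Z.le_max' k this) (by omega)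
            have h2' : g k ≠ 2 := by
              intro hk2
              obtain ⟨p, hp1, hp2, hp3⟩ := hg.2 k s h2 hk2 hgs2
              have : p ∈ Z := Finset.mem_filter.2 ⟨Finset.mem_range.2 hp2, hp3⟩
              have := Z.le_max' p this
              omega
            have := hg.1 k
            omega
          -- split gval g s at m+1
          have hsplit : gval g s = gval g (m+1) + ∑ k ∈ Finset.Ico (m+1) s, g k * Nat.fib (2*k+2) := by
            rw [gval, gval, Finset.range_eq_Ico, Finset.range_eq_Ico]
            exact (Finset.sum_Ico_consecutive _ (Nat.zero_le _) (by omega : m+1 ≤ s)).symm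
          have hIco : ∑ k ∈ Finset.Ico (m+1) s, g k * Nat.fib (2*k+2)
              = ∑ k ∈ Finset.Ico (m+1) s, Nat.fib (2*k+2) := by
            apply Finset.sum_congr rfl
            intro k hk
            have hk' := Finset.mem_Ico.1 hk
            rw [hall k hk'.1 hk'.2, one_mul]
          have hpeelm : gval g (m+1) = gval g m := by
            simp [gval, Finset.sum_range_succ, hm0]
          have hsum1 := sumfib s
          have hsum2 := sumfib (m+1)
          rw [show 2*(m+1)+1 = 2*m+3 by ring] at hsum2
          have hsplit2 : (∑ k ∈ Finset.range s, Nat.fib (2*k+2))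
              = (∑ k ∈ Finset.range (m+1), Nat.fib (2*k+2)) + ∑ k ∈ Finset.Ico (m+1) s, Nat.fib (2*k+2) := by
            rw [Finset.range_eq_Ico, Finset.range_eq_Ico]
            exact (Finset.sum_Ico_consecutive _ (Nat.zero_le _) (by omega : m+1 ≤ s)).symm
          have f3 : Nat.fib (2*m+3) = Nat.fib (2*m+1) + Nat.fib (2*m+2) := by
            rw [show 2*m+3 = (2*m+1) + 2 by ring, Nat.fib_add_two, show 2*m+1+1 = 2*m+2 by ring]
          have ihm := ih m (by omega)
          omega
        · -- no zero below s : every digit below s is 1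
          have hall : ∀ k, k < s → g k = 1 := by
            intro k h2
            have h0 : g k ≠ 0 := by
              intro hk0
              exact hZ ⟨k, Finset.mem_filter.2 ⟨Finset.mem_range.2 h2, hk0⟩⟩
            have h2' : g k ≠ 2 := by
              intro hk2
              obtain ⟨p, hp1, hp2, hp3⟩ := hg.2 k s h2 hk2 hgs2
              exact hZ ⟨p, Finset.mem_filter.2 ⟨Finset.mem_range.2 hp2, hp3⟩⟩
            have := hg.1 k
            omega
          have hIco : gval g s = ∑ k ∈ Finset.range s, Nat.fib (2*k+2) := by
            rw [gval]
            apply Finset.sum_congr rfl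
            intro k hk
            rw [hall k (Finset.mem_range.1 hk), one_mul]
          have hsum1 := sumfib s
          omega

lemma guniq (T : ℕ) : ∀ g h : ℕ → ℕ, CGseq g → CGseq h → gval g T = gval h T →
    ∀ k, k < T → g k = h k := by
  induction T with
  | zero => intro _ _ _ _ _ k hk; omega
  | succ s ih =>
    intro g h hg hh heq k hk
    have e1 : gval g (s+1) = gval g s + g s * Nat.fib (2*s+2) := by
      simp [gval, Finset.sum_range_succ]
    have e2 : gval h (s+1) = gval h s + h s * Nat.fib (2*s+2) := by
      simp [gval, Finset.sum_range_succ]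
    have bg := gbound g hg s
    have bh := gbound h hh s
    have htop : g s = h s := by
      rcases lt_trichotomy (g s) (h s) with h1 | h1 | h1
      · have hmul : g s * Nat.fib (2*s+2) + Nat.fib (2*s+2) ≤ h s * Nat.fib (2*s+2) := by
          calc g s * Nat.fib (2*s+2) + Nat.fib (2*s+2) = (g s + 1) * Nat.fib (2*s+2) := by ring
          _ ≤ h s * Nat.fib (2*s+2) := mul_le_mul_left (by omega) _
        omega
      · exact h1
      · have hmul : h s * Nat.fib (2*s+2) + Nat.fib (2*s+2) ≤ g s * Nat.fib (2*s+2) := by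
          calc h s * Nat.fib (2*s+2) + Nat.fib (2*s+2) = (h s + 1) * Nat.fib (2*s+2) := by ring
          _ ≤ g s * Nat.fib (2*s+2) := mul_le_mul_left (by omega) _
        omega
    have hprod : g s * Nat.fib (2*s+2) = h s * Nat.fib (2*s+2) := by rw [htop]
    rcases Nat.lt_or_ge k s with hks | hks
    · exact ih g h hg hh (by omega) k hks
    · have : k = s := by omega
      rw [this, htop]

theorem chung_graham_unique (a b : ℕ →₀ ℕ)
    (ha : IsChungGraham a) (hb : IsChungGraham b)
    (h : fibVal a = fibVal b) : a = b := by
  obtain ⟨ha1, ha2, ha3⟩ := ha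
  obtain ⟨hb1, hb2, hb3⟩ := hb
  set T : ℕ := (a.support ∪ b.support).sup id + 1 with hTdef
  have haT : ∀ i, T ≤ i → a i = 0 := by
    intro i hi
    by_contra hne
    have : i ∈ a.support ∪ b.support := Finset.mem_union_left _ (Finsupp.mem_support_iff.2 hne)
    have := Finset.le_sup (f := id) this
    simp only [id] at this
    omega
  have hbT : ∀ i, T ≤ i → b i = 0 := by
    intro i hi
    by_contra hne
    have : i ∈ a.support ∪ b.support := Finset.mem_union_right _ (Finsupp.mem_support_iff.2 hne)
    have := Finset.le_sup (f := id) this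
    simp only [id] at this
    omega
  -- CGseq for even-index sequences
  have mkcg : ∀ c : ℕ →₀ ℕ, (∀ i, c i ≤ 2) →
      (∀ i j, Even i → Even j → i < j → c i = 2 → c j = 2 →
        ∃ k, Even k ∧ i < k ∧ k < j ∧ c k = 0) → CGseq (fun k => c (2*k)) := by
    intro c hc1 hc3
    refine ⟨fun k => hc1 _, ?_⟩
    intro k l hkl h2k h2l
    obtain ⟨m, hme, hm1, hm2, hm0⟩ := hc3 (2*k) (2*l) ⟨k, by ring⟩ ⟨l, by ring⟩ (by omega) h2k h2l
    obtain ⟨r, hr⟩ := hme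
    refine ⟨r, by omega, by omega, ?_⟩
    show c (2*r) = 0
    rw [show 2*r = m by omega, hm0]
  have hga : CGseq (fun k => a (2*k)) := mkcg a ha1 ha3
  have hgb : CGseq (fun k => b (2*k)) := mkcg b hb1 hb3
  -- fibVal as gval
  have key : ∀ c : ℕ →₀ ℕ, (∀ i, Odd i → c i = 0) → (∀ i, T ≤ i → c i = 0) →
      fibVal c = gval (fun k => c (2*k)) T := by
    intro c hodd hbig
    have h1 : fibVal c = ∑ i ∈ Finset.range (2*T), c i * Nat.fib (i+2) := by
      rw [fibVal]
      apply Finsupp.sum_of_support_subset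
      · intro i hi
        have hne := Finsupp.mem_support_iff.1 hi
        rw [Finset.mem_range]
        by_contra hge
        exact hne (hbig i (by omega))
      · intro i _; exact zero_mul _
    rw [h1]
    have h2 : ∀ t : ℕ, ∑ i ∈ Finset.range (2*t), c i * Nat.fib (i+2)
        = gval (fun k => c (2*k)) t := by
      intro t
      induction t with
      | zero => simp [gval]
      | succ u ihu =>
        rw [show 2*(u+1) = (2*u)+1+1 by ring, Finset.sum_range_succ, Finset.sum_range_succ,
          ihu, hodd (2*u+1) ⟨u, by ring⟩, zero_mul, add_zero]
        simp [gval, Finset.sum_range_succ]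
    exact h2 T
  have heq : gval (fun k => a (2*k)) T = gval (fun k => b (2*k)) T := by
    rw [← key a ha2 haT, ← key b hb2 hbT, h]
  have hallk := guniq T _ _ hga hgb heq
  ext i
  rcases Nat.even_or_odd i with hi | hi
  · obtain ⟨r, hr⟩ := hi
    rcases Nat.lt_or_ge r T with hrT | hrT
    · have := hallk r hrT
      simpa [show 2*r = i by omega] using this
    · rw [haT i (by omega), hbT i (by omega)]
  · rw [ha2 i hi, hb2 i hi]
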